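/- Let E be a row-finite directed graph without cycles and let V be a finite subset of E^0. Then the following are equivalent: (1) the subgraph E|_{VE^{≤∞}} has only finitely many splitting pairs of edges; (2) there exists a finite set F ⊆ E^* such that for every x, y ∈ VE^{≤∞} with x ∼ y, the pair (x, y) is a monolithic extension of a pair in F × F. -/

import Mathlib

/-- A directed graph: countable sets of vertices and edges, with range and source
maps. -/
structure DGraph : Type 1 where
  V : Type
  E : Type
  countableV : Countable V
  countableE : Countable E
  r : E → V
  s : E → V

namespace DGraph

/-- `E` is row-finite: every vertex receives only finitely many edges. -/
def RowFinite (G : DGraph) : Prop := ∀ v : G.V, {e : G.E | G.r e = v}.Finite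

/-- A source of `E`: a vertex receiving no edges. -/
def IsSource (G : DGraph) (v : G.V) : Prop := ∀ e : G.E, G.r e ≠ v

end DGraph

/-- A (finite or infinite) path in the directed graph `G`.  `edge i` is the
`(i+1)`-st edge of the path (or `none` beyond the end of the path); once `none`
always `none`, so a path is either a vertex (`rng`, with no edges), a finite path,
or an infinite path.  Edges are composed so that `s(edge i) = r(edge (i+1))`. -/
structure LPath (G : DGraph) where
  rng : G.V
  edge : ℕ → Option G.E
  edge_closed : ∀ i, edge i = none → edge (i + 1) = none
  rng_compat : ∀ e, edge 0 = some e → G.r e = rng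
  compat : ∀ i e f, edge i = some e → edge (i + 1) = some f → G.s e = G.r f

namespace LPath

variable {G : DGraph}

/-- The vertex `x(n)` of the path `x` (a junk value, the range, beyond the length
of the path). -/
def vert (x : LPath G) : ℕ → G.V
  | 0 => x.rng
  | n + 1 =>
    match x.edge n with
    | some e => G.s e
    | none => x.rng

/-- `x` is an infinite path, i.e. a member of `E^∞`. -/
def Infinite (x : LPath G) : Prop := ∀ i, (x.edge i).isSome

/-- `n ≤ |x|`: the first `n` edges of `x` all exist. -/
def LeLen (x : LPath G) (n : ℕ) : Prop := ∀ i, i < n → (x.edge i).isSome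

/-- `|x| = n`: `x` is a finite path of length `n`. -/
def LenEq (x : LPath G) (n : ℕ) : Prop := x.edge n = none ∧ x.LeLen n

theorem vert_eq (x : LPath G) (m : ℕ) (e : G.E) (h : x.edge m = some e) :
    G.r e = x.vert m := by
  cases m with
  | zero => exact x.rng_compat e h
  | succ n =>
    cases hn : x.edge n with
    | none => exact absurd h (by simp [x.edge_closed n hn])
    | some f =>
      have hc := x.compat n f e hn h
      simp only [vert, hn]
      exact hc.symm

/-- The shifted path `σ^m(x)` (meaningful when `m ≤ |x|`). -/
def shift (x : LPath G) (m : ℕ) : LPath G where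
  rng := x.vert m
  edge i := x.edge (m + i)
  edge_closed i h := x.edge_closed (m + i) h
  rng_compat e he := x.vert_eq m e he
  compat i e f he hf := x.compat (m + i) e f he hf

/-- `x` is shift equivalent to `y` with lag `n ∈ ℤ`: there are `p, q ∈ ℕ` with
`p - q = n`, `p ≤ |x|`, `q ≤ |y|` and `σ^p(x) = σ^q(y)`. -/
def ShiftEquivLag (x y : LPath G) (n : ℤ) : Prop :=
  ∃ p q : ℕ, (p : ℤ) - (q : ℤ) = n ∧ x.LeLen p ∧ y.LeLen q ∧ x.shift p = y.shift q

/-- `x` is shift equivalent to `y`. -/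
def ShiftEquiv (x y : LPath G) : Prop := ∃ n : ℤ, ShiftEquivLag x y n

/-- `x` belongs to `E^{≤∞}`: it is infinite, or finite with its source a source
of the graph. -/
def Boundary (x : LPath G) : Prop :=
  x.Infinite ∨ ∃ n : ℕ, x.LenEq n ∧ G.IsSource (x.vert n)

/-- `x` is frequently divertable to `[y]`: for every `n ≤ |x|` there is a path in
`x(n)E^{≤∞}` that is shift equivalent to `y`. -/
def FreqDiv (x y : LPath G) : Prop :=
  ∀ n : ℕ, x.LeLen n → ∃ z : LPath G, z.Boundary ∧ z.rng = x.vert n ∧ ShiftEquiv z y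

/-- The segment `x(m, n)` of `x` is a cycle: it is closed (`x(m) = x(n)`) and the
sources `x(i)`, `m < i ≤ n`, of its edges are pairwise distinct. -/
def HasCycleAt (x : LPath G) (m n : ℕ) : Prop :=
  m < n ∧ x.LeLen n ∧ x.vert m = x.vert n ∧
    ∀ i j, m < i → i ≤ n → m < j → j ≤ n → x.vert i = x.vert j → i = j

/-- `x` contains a cycle. -/
def ContainsCycle (x : LPath G) : Prop := ∃ m n, x.HasCycleAt m n

end LPath

/-- A cycle in `G`: a finite path `α = α_1 ⋯ α_len` (here 0-indexed, and with junk
values of `edge` beyond `len`) of non-zero length with `r(α) = s(α)` and whose edges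
have pairwise distinct sources. -/
structure DCycle (G : DGraph) where
  len : ℕ
  len_pos : 0 < len
  edge : ℕ → G.E
  compat : ∀ i, i + 1 < len → G.s (edge i) = G.r (edge (i + 1))
  closed : G.s (edge (len - 1)) = G.r (edge 0)
  distinct : ∀ i j, i < len → j < len → G.s (edge i) = G.s (edge j) → i = j

namespace DCycle

variable {G : DGraph}

/-- `f` is an entry to the cycle `c`: `r(f) = r(c_i)` and `f ≠ c_i` for some `i`. -/
def IsEntry (c : DCycle G) (f : G.E) : Prop :=
  ∃ i, i < c.len ∧ G.r f = G.r (c.edge i) ∧ f ≠ c.edge i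

/-- The edge `f` lies in the cycle `c`. -/
def EdgeMem (c : DCycle G) (f : G.E) : Prop := ∃ i, i < c.len ∧ c.edge i = f

end DCycle

/-- `(x, y)` is a monolithic extension of the pair `(α, β)` of finite paths:
`|α| ≤ |x|`, `|β| ≤ |y|`, `x(0, |α|) = α`, `y(0, |β|) = β` and
`σ^{|α|}(x) = σ^{|β|}(y)` (i.e. `x = αz` and `y = βz` for a common tail `z`). -/
def IsMonoExtOf {G : DGraph} (x y α β : LPath G) : Prop :=
  ∃ a b : ℕ, α.LenEq a ∧ β.LenEq b ∧ x.LeLen a ∧ y.LeLen b ∧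
    x.rng = α.rng ∧ (∀ i, i < a → x.edge i = α.edge i) ∧
    y.rng = β.rng ∧ (∀ i, i < b → y.edge i = β.edge i) ∧
    x.shift a = y.shift b

/-- An edge occurring in some path of `VE^{≤∞}`, i.e. an edge of the subgraph
`E|_{VE^{≤∞}}`. -/
def EdgeOfSub {G : DGraph} (V : Set G.V) (e : G.E) : Prop :=
  ∃ x : LPath G, x.Boundary ∧ x.rng ∈ V ∧ ∃ i, x.edge i = some e

theorem nat_least {p : ℕ → Prop} (h : ∃ n, p n) : ∃ n, p n ∧ ∀ j, j < n → ¬ p j := by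
  classical
  exact ⟨Nat.find h, Nat.find_spec h, fun j hj => Nat.find_min h hj⟩

namespace LPath

variable {G : DGraph}

theorem ext' {x y : LPath G} (h1 : x.rng = y.rng) (h2 : ∀ i, x.edge i = y.edge i) :
    x = y := by
  cases x; cases y
  simp only [mk.injEq]
  exact ⟨h1, funext h2⟩

theorem edge_none_mono (x : LPath G) {i j : ℕ} (h : x.edge i = none) (hij : i ≤ j) :
    x.edge j = none := by
  induction j, hij using Nat.le_induction with
  | base => exact h
  | succ n hn ih => exact x.edge_closed n ih

theorem isSome_mono (x : LPath G) {i j : ℕ} (h : (x.edge j).isSome) (hij : i ≤ j) :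
    (x.edge i).isSome := by
  rcases he : x.edge i with _ | e
  · rw [x.edge_none_mono he hij] at h; simp at h
  · simp

theorem vert_succ (x : LPath G) {m : ℕ} {e : G.E} (h : x.edge m = some e) :
    x.vert (m + 1) = G.s e := by
  simp [vert, h]

theorem shift_edge (x : LPath G) (m k : ℕ) : (x.shift m).edge k = x.edge (m + k) := rfl

theorem shift_rng (x : LPath G) (m : ℕ) : (x.shift m).rng = x.vert m := rfl

theorem vert_shift (x : LPath G) {m k : ℕ} (h : (x.edge (m + k)).isSome) :
    (x.shift m).vert (k + 1) = x.vert (m + k + 1) := by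
  rcases he : x.edge (m + k) with _ | e
  · rw [he] at h; simp at h
  · rw [x.vert_succ he, (x.shift m).vert_succ (by rw [shift_edge, he])]

theorem leLen_mono (x : LPath G) {m n : ℕ} (h : x.LeLen n) (hmn : m ≤ n) : x.LeLen m :=
  fun i hi => h i (lt_of_lt_of_le hi hmn)

/-- Acyclicity implies vertices along a path are distinct. -/
theorem vert_inj (hnc : IsEmpty (DCycle G)) (x : LPath G) {m n N : ℕ}
    (hN : x.LeLen N) (hmn : m < n) (hn : n ≤ N) (h : x.vert m = x.vert n) : False := by
  classical
  have hQ : ∃ k, 0 < k ∧ ∃ a b, b ≤ N ∧ a < b ∧ b - a = k ∧ x.vert a = x.vert b :=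
    ⟨n - m, by omega, m, n, hn, hmn, rfl, h⟩
  obtain ⟨hk0, a, b, hbN, hab, hk, hv⟩ := Nat.find_spec hQ
  set k0 := Nat.find hQ with hk0def
  have hmin : ∀ k', 0 < k' → k' < k0 →
      ∀ a' b', b' ≤ N → a' < b' → b' - a' = k' → x.vert a' ≠ x.vert b' := by
    intro k' h1 h2 a' b' h3 h4 h5 h6
    exact Nat.find_min hQ h2 ⟨h1, a', b', h3, h4, h5, h6⟩
  have hsome : ∀ i : ℕ, (x.edge (a + min i (k0 - 1))).isSome := by
    intro i
    exact hN _ (by omega)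
  set ε : ℕ → G.E := fun i => (x.edge (a + min i (k0 - 1))).get (hsome i) with hεdef
  have hε : ∀ i, i < k0 → x.edge (a + i) = some (ε i) := by
    intro i hi
    have hm : a + min i (k0 - 1) = a + i := by omega
    have h2 : x.edge (a + min i (k0 - 1)) = x.edge (a + i) := by rw [hm]
    exact ((Option.some_get (hsome i)).trans h2).symm
  have hvs : ∀ i, i < k0 → x.vert (a + i + 1) = G.s (ε i) := by
    intro i hi
    exact x.vert_succ (hε i hi)
  refine hnc.elim ⟨k0, hk0, ε, ?_, ?_, ?_⟩
  · intro i hi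
    refine x.compat (a + i) _ _ (hε i (by omega)) ?_
    have := hε (i + 1) hi
    rwa [← Nat.add_assoc] at this
  · have e1 := hvs (k0 - 1) (by omega)
    have hb : a + (k0 - 1) + 1 = b := by omega
    rw [hb] at e1
    have e2 := x.vert_eq a (ε 0) (by have := hε 0 hk0; rwa [Nat.add_zero] at this)
    rw [← e1, e2]
    exact hv.symm
  · intro i j hi hj hs
    have hv' : x.vert (a + i + 1) = x.vert (a + j + 1) := by
      rw [hvs i hi, hvs j hj]; exact hs
    by_contra hne
    rcases Nat.lt_or_ge i j with hij | hij
    · rcases Nat.eq_or_lt_of_le (by omega : a + j + 1 ≤ b) with hb | hb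
      · have : x.vert a = x.vert (a + i + 1) := by rw [hv, ← hb, hv']
        exact hmin (i+1) (by omega) (by omega) a (a+i+1) (by omega) (by omega) (by omega) this
      · exact hmin (j - i) (by omega) (by omega) (a+i+1) (a+j+1) (by omega) (by omega) (by omega) hv'
    · have hij' : j < i := by omega
      rcases Nat.eq_or_lt_of_le (by omega : a + i + 1 ≤ b) with hb | hb
      · have : x.vert a = x.vert (a + j + 1) := by rw [hv, ← hb, ← hv']
        exact hmin (j+1) (by omega) (by omega) a (a+j+1) (by omega) (by omega) (by omega) this
      · exact hmin (i - j) (by omega) (by omega) (a+j+1) (a+i+1) (by omega) (by omega) (by omega) hv'.symm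

end LPath
namespace LPath

variable {G : DGraph}

/-- Truncation of a path to its first `n` edges. -/
def trunc (x : LPath G) (n : ℕ) : LPath G where
  rng := x.rng
  edge i := if i < n then x.edge i else none
  edge_closed i h := by
    by_cases h1 : i + 1 < n
    · have h0 : i < n := by omega
      rw [if_pos h1]
      rw [if_pos h0] at h
      exact x.edge_closed i h
    · rw [if_neg h1]
  rng_compat e he := by
    by_cases h0 : 0 < n
    · rw [if_pos h0] at he; exact x.rng_compat e he
    · rw [if_neg h0] at he; cases he
  compat i e f he hf := by
    by_cases h1 : i + 1 < n
    · rw [if_pos (by omega : i < n)] at he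
      rw [if_pos h1] at hf
      exact x.compat i e f he hf
    · rw [if_neg h1] at hf; cases hf

theorem trunc_edge_lt (x : LPath G) {n i : ℕ} (h : i < n) : (x.trunc n).edge i = x.edge i :=
  if_pos h

theorem trunc_lenEq (x : LPath G) {n : ℕ} (h : x.LeLen n) : (x.trunc n).LenEq n := by
  constructor
  · exact if_neg (by omega)
  · intro i hi
    rw [trunc_edge_lt x hi]
    exact h i hi

theorem trunc_vert (x : LPath G) {n k : ℕ} (hk : k ≤ n) : (x.trunc n).vert k = x.vert k := by
  cases k with
  | zero => rfl
  | succ j =>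
    show (match (x.trunc n).edge j with | some e => G.s e | none => (x.trunc n).rng) = _
    rw [trunc_edge_lt x (by omega : j < n)]
    rfl

/-- Concatenation: the first `n` edges of `x` followed by `z`. -/
def cat (x : LPath G) (n : ℕ) (z : LPath G) (hx : x.LeLen n) (hz : z.rng = x.vert n) :
    LPath G where
  rng := x.rng
  edge i := if i < n then x.edge i else z.edge (i - n)
  edge_closed i h := by
    by_cases h0 : i < n
    · rw [if_pos h0] at h
      have := hx i h0
      rw [h] at this
      simp at this
    · rw [if_neg h0] at h
      rw [if_neg (by omega : ¬ i + 1 < n)]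
      have : i + 1 - n = (i - n) + 1 := by omega
      rw [this]
      exact z.edge_closed _ h
  rng_compat e he := by
    by_cases h0 : 0 < n
    · rw [if_pos h0] at he; exact x.rng_compat e he
    · rw [if_neg h0] at he
      have hn : n = 0 := by omega
      have := z.rng_compat e (by rwa [Nat.zero_sub] at he)
      rw [this, hz, hn]
      cases hn; rfl
  compat i e f he hf := by
    rcases Nat.lt_trichotomy (i+1) n with h1 | h1 | h1
    · rw [if_pos (by omega : i < n)] at he
      rw [if_pos h1] at hf
      exact x.compat i e f he hf
    · rw [if_pos (by omega : i < n)] at he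
      rw [if_neg (by omega), h1, Nat.sub_self] at hf
      have h2 := z.rng_compat f hf
      rw [hz, ← h1] at h2
      rw [h2]
      exact (x.vert_succ he).symm
    · rw [if_neg (by omega : ¬ i < n)] at he
      rw [if_neg (by omega : ¬ i + 1 < n)] at hf
      have : i + 1 - n = (i - n) + 1 := by omega
      rw [this] at hf
      exact z.compat _ e f he hf

variable {x z : LPath G} {n : ℕ} {hx : x.LeLen n} {hz : z.rng = x.vert n}

theorem cat_edge_lt {i : ℕ} (h : i < n) : (cat x n z hx hz).edge i = x.edge i := if_pos h

theorem cat_edge_ge {i : ℕ} (h : n ≤ i) : (cat x n z hx hz).edge i = z.edge (i - n) :=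
  if_neg (by omega)

theorem cat_rng : (cat x n z hx hz).rng = x.rng := rfl

theorem cat_vert_n : (cat x n z hx hz).vert n = z.rng := by
  cases n with
  | zero => exact hz.symm
  | succ j =>
    have hj := hx j (by omega)
    rcases he : x.edge j with _ | e
    · rw [he] at hj; simp at hj
    · have : (cat x (j+1) z hx hz).edge j = some e := by
        rw [cat_edge_lt (by omega)]; exact he
      rw [vert_succ _ this, hz, x.vert_succ he]

theorem cat_shift : (cat x n z hx hz).shift n = z := by
  refine ext' ?_ ?_
  · exact cat_vert_n
  · intro i
    rw [shift_edge, cat_edge_ge (by omega)]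
    congr 1
    omega

theorem cat_leLen : (cat x n z hx hz).LeLen n := by
  intro i hi
  rw [cat_edge_lt hi]
  exact hx i hi

theorem cat_vert {k : ℕ} (hk : z.LeLen k) : (cat x n z hx hz).vert (n + k) = z.vert k := by
  cases k with
  | zero => exact cat_vert_n
  | succ j =>
    have hj := hk j (by omega)
    rcases he : z.edge j with _ | e
    · rw [he] at hj; simp at hj
    · have : (cat x n z hx hz).edge (n + j) = some e := by
        rw [cat_edge_ge (by omega), Nat.add_sub_cancel_left]; exact he
      rw [← Nat.add_assoc, vert_succ _ this, z.vert_succ he]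

theorem cat_boundary (hb : z.Boundary) : (cat x n z hx hz).Boundary := by
  rcases hb with hb | ⟨m, hm, hsrc⟩
  · left
    intro i
    by_cases h0 : i < n
    · rw [cat_edge_lt h0]; exact hx i h0
    · rw [cat_edge_ge (by omega)]; exact hb _
  · right
    refine ⟨n + m, ⟨?_, ?_⟩, ?_⟩
    · rw [cat_edge_ge (by omega), Nat.add_sub_cancel_left]
      exact hm.1
    · intro i hi
      by_cases h0 : i < n
      · rw [cat_edge_lt h0]; exact hx i h0
      · rw [cat_edge_ge (by omega)]
        exact hm.2 _ (by omega)
    · rw [cat_vert hm.2]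
      exact hsrc

/-- From every vertex there is a boundary path. -/
theorem boundary_from (w : G.V) : ∃ z : LPath G, z.Boundary ∧ z.rng = w := by
  classical
  let step : G.V → Option G.E := fun v => if h : ∃ e, G.r e = v then some h.choose else none
  have step_spec : ∀ v e, step v = some e → G.r e = v := by
    intro v e he
    simp only [step] at he
    split at he
    · rename_i h
      cases he
      exact h.choose_spec
    · cases he
  have step_none : ∀ v, step v = none → ∀ e, G.r e ≠ v := by
    intro v hv e he
    simp only [step] at hv
    split at hv
    · cases hv
    · rename_i h
      exact h ⟨e, he⟩
  let seq : ℕ → Option G.E := fun n => Nat.rec (step w) (fun _ o => o.bind (fun f => step (G.s f))) n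
  have seq_succ : ∀ n, seq (n+1) = (seq n).bind (fun f => step (G.s f)) := fun n => rfl
  have seq0 : seq 0 = step w := rfl
  let z : LPath G := {
    rng := w
    edge := seq
    edge_closed := by
      intro i h
      rw [seq_succ, h]
      rfl
    rng_compat := by
      intro e he
      exact step_spec w e he
    compat := by
      intro i e f he hf
      rw [seq_succ, he] at hf
      exact (step_spec _ f hf).symm }
  refine ⟨z, ?_, rfl⟩
  by_cases hinf : ∀ i, (seq i).isSome
  · exact Or.inl hinf
  · push_neg at hinf
    obtain ⟨i, hi⟩ := hinf
    have hnone : ∃ i, seq i = none := ⟨i, by rcases h : seq i with _|_ <;> simp [h] at hi ⊢⟩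
    obtain ⟨n0, hn0, hminn⟩ := nat_least hnone
    right
    refine ⟨n0, ⟨hn0, ?_⟩, ?_⟩
    · intro j hj
      have := hminn j hj
      rcases h : seq j with _|_
      · exact absurd h this
      · show (seq j).isSome = true; simp [h]
    · rcases hn : n0 with _ | j
      · intro e he
        refine step_none w ?_ e he
        rw [hn] at hn0
        exact hn0
      · have hj : (seq j).isSome := by
          have := hminn j (by omega)
          rcases h : seq j with _|_
          · exact absurd h this
          · simp [h]
        rcases h : seq j with _|e
        · rw [h] at hj; simp at hj
        · have hv : z.vert (j+1) = G.s e := z.vert_succ h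
          rw [hv]
          have hs : seq (j+1) = none := by rwa [hn] at hn0
          rw [seq_succ, h] at hs
          exact step_none _ hs

end LPath
namespace Stmt19

open LPath

variable {G : DGraph} (V : Set G.V)

/-- The set of splitting pairs of the subgraph. -/
def SPs : Set (G.E × G.E) :=
  {p | p.1 ≠ p.2 ∧ G.s p.1 = G.s p.2 ∧ EdgeOfSub V p.1 ∧ EdgeOfSub V p.2}

/-- Edges occurring in splitting pairs. -/
def SE : Set G.E := {e | ∃ p ∈ SPs V, p.1 = e ∨ p.2 = e}

/-- Sources of splitting pairs. -/
def SV : Set G.V := {v | ∃ p ∈ SPs V, G.s p.1 = v}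

/-- The fiber of subgraph edges with source `w`. -/
def Fib (w : G.V) : Set G.E := {e | EdgeOfSub V e ∧ G.s e = w}

variable {V}

theorem SE_finite (hfin : (SPs V).Finite) : (SE V).Finite := by
  refine Set.Finite.subset ((hfin.image Prod.fst).union (hfin.image Prod.snd)) ?_
  rintro e ⟨p, hp, h | h⟩
  · exact Or.inl ⟨p, hp, h⟩
  · exact Or.inr ⟨p, hp, h⟩

theorem SV_finite (hfin : (SPs V).Finite) : (SV V).Finite := by
  refine Set.Finite.subset (hfin.image (fun p => G.s p.1)) ?_
  rintro v ⟨p, hp, h⟩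
  exact ⟨p, hp, h⟩

theorem fib_eq {w : G.V} (hw : w ∉ SV V) {f g : G.E} (hf : EdgeOfSub V f)
    (hg : EdgeOfSub V g) (hsf : G.s f = w) (hsg : G.s g = w) : f = g := by
  by_contra hne
  exact hw ⟨(f, g), ⟨hne, by rw [hsf, hsg], hf, hg⟩, hsf⟩

theorem fib_finite (hfin : (SPs V).Finite) (w : G.V) : (Fib V w).Finite := by
  rcases (Fib V w).eq_empty_or_nonempty with h | ⟨f, hf⟩
  · rw [h]; exact Set.finite_empty
  · refine Set.Finite.subset ((hfin.image Prod.snd).insert f) ?_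
    intro g hg
    by_cases hfg : g = f
    · exact Or.inl hfg
    · exact Or.inr ⟨(f, g), ⟨fun h => hfg h.symm, by rw [hf.2, hg.2], hf.1, hg.1⟩, rfl⟩

/-- The finite set of finite paths that we take for `F`. -/
def FSet (V : Set G.V) : Set (LPath G) :=
  {α | ∃ n, α.LenEq n ∧ α.rng ∈ V ∧ (∀ i, i < n → ∃ e, α.edge i = some e ∧ EdgeOfSub V e) ∧
    (n = 0 ∨ α.vert n ∈ V ∨ ∃ e, α.edge (n - 1) = some e ∧ e ∈ SE V)}

/-- The set of last edges of a finite path (a singleton, or empty for trivial paths). -/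
def lastS (α : LPath G) : Set G.E := {e | ∃ j, α.edge j = some e ∧ α.edge (j + 1) = none}

/-- The trace of a path: its edges whose source is a splitting vertex, tagged by
that vertex. -/
def trace (V : Set G.V) (α : LPath G) : Set (G.V × G.E) :=
  {p | ∃ j, α.edge j = some p.2 ∧ G.s p.2 = p.1 ∧ p.1 ∈ SV V}

theorem lastS_eq {α : LPath G} {n : ℕ} (hn : α.LenEq n) (hpos : 0 < n) {e : G.E}
    (he : α.edge (n - 1) = some e) : lastS α = {e} := by
  ext g
  constructor
  · rintro ⟨j, hj1, hj2⟩
    have hjn : j < n := by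
      by_contra h
      rw [α.edge_none_mono hn.1 (by omega)] at hj1
      cases hj1
    have hjn' : n ≤ j + 1 := by
      by_contra h
      have := hn.2 (j+1) (by omega)
      rw [hj2] at this
      simp at this
    have : j = n - 1 := by omega
    rw [this, he] at hj1
    cases hj1
    rfl
  · rintro rfl
    refine ⟨n - 1, he, ?_⟩
    have : n - 1 + 1 = n := by omega
    rw [this]
    exact hn.1

theorem lastS_trivial {α : LPath G} (hn : α.LenEq 0) : lastS α = ∅ := by
  ext g
  simp only [Set.mem_empty_iff_false, iff_false, lastS, Set.mem_setOf_eq]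
  rintro ⟨j, hj1, _⟩
  rw [α.edge_none_mono hn.1 (by omega)] at hj1
  cases hj1

/-- Key injectivity: two members of `FSet` with the same range, last edge and trace
are equal (ordered version). -/
theorem key (hnc : IsEmpty (DCycle G)) {α α' : LPath G}
    (hα : α ∈ FSet V) (hα' : α' ∈ FSet V)
    {n n' : ℕ} (hn : α.LenEq n) (hn' : α'.LenEq n') (hle : n ≤ n')
    (h1 : α.rng = α'.rng) (h2 : lastS α = lastS α') (h3 : trace V α = trace V α') :
    α = α' := by
  obtain ⟨m, hm, -, hsub, -⟩ := hα
  obtain ⟨m', hm', -, hsub', -⟩ := hα'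
  -- identify m = n, m' = n'
  have hmn : m = n := by
    by_contra h
    rcases Nat.lt_or_ge m n with h' | h'
    · have := hn.2 m h'
      rw [hm.1] at this
      simp at this
    · have := hm.2 n (by omega)
      rw [hn.1] at this
      simp at this
  have hmn' : m' = n' := by
    by_contra h
    rcases Nat.lt_or_ge m' n' with h' | h'
    · have := hn'.2 m' h'
      rw [hm'.1] at this
      simp at this
    · have := hm'.2 n' (by omega)
      rw [hn'.1] at this
      simp at this
  rw [hmn] at hsub hm
  rw [hmn'] at hsub' hm'
  have vne : ∀ (x : LPath G) (N i j : ℕ), x.LeLen N → i ≤ N → j ≤ N →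
      x.vert i = x.vert j → i = j := by
    intro x N i j hN hi hj hv
    rcases Nat.lt_trichotomy i j with h | h | h
    · exact absurd hv (fun hv => vert_inj hnc x hN h hj hv)
    · exact h
    · exact absurd hv.symm (fun hv => vert_inj hnc x hN h hi hv)
  rcases Nat.eq_zero_or_pos n with hn0 | hn0
  · subst hn0
    rcases Nat.eq_zero_or_pos n' with hn0' | hn0'
    · subst hn0'
      refine LPath.ext' h1 (fun i => ?_)
      rw [α.edge_none_mono hn.1 (by omega), α'.edge_none_mono hn'.1 (by omega)]
    · obtain ⟨e, he, -⟩ := hsub' (n' - 1) (by omega)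
      have : e ∈ lastS α' := by rw [lastS_eq hn' hn0' he]; rfl
      rw [← h2, lastS_trivial hn] at this
      cases this
  · have hn0' : 0 < n' := by omega
    have claim : ∀ k, k < n → α.edge (n - 1 - k) = α'.edge (n' - 1 - k) := by
      intro k
      induction k with
      | zero =>
        intro _
        obtain ⟨e, he, -⟩ := hsub (n - 1) (by omega)
        obtain ⟨e', he', -⟩ := hsub' (n' - 1) (by omega)
        have hee : e = e' := by
          have := (lastS_eq hn hn0 he).symm.trans (h2.trans (lastS_eq hn' hn0' he'))
          exact Set.singleton_eq_singleton_iff.mp this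
        rw [Nat.sub_zero, Nat.sub_zero, he, he', hee]
      | succ k ih =>
        intro hk
        have he0 := ih (by omega)
        obtain ⟨e, he, -⟩ := hsub (n - 1 - k) (by omega)
        have he' : α'.edge (n' - 1 - k) = some e := by rw [← he0]; exact he
        obtain ⟨f, hf, hfsub⟩ := hsub (n - 1 - (k + 1)) (by omega)
        obtain ⟨f', hf', hfsub'⟩ := hsub' (n' - 1 - (k + 1)) (by
          omega)
        have hidx : n - 1 - (k + 1) + 1 = n - 1 - k := by omega
        have hidx' : n' - 1 - (k + 1) + 1 = n' - 1 - k := by omega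
        have hsf : G.s f = G.r e := α.compat _ f e hf (by rw [hidx]; exact he)
        have hsf' : G.s f' = G.r e := α'.compat _ f' e hf' (by rw [hidx']; exact he')
        rw [hf, hf']
        by_cases hw : G.r e ∈ SV V
        · have htr : ((G.r e, f) : G.V × G.E) ∈ trace V α :=
            ⟨n - 1 - (k + 1), hf, hsf, hw⟩
          rw [h3] at htr
          obtain ⟨j, hj1, hj2, -⟩ := htr
          have hjlt : j < n' := by
            by_contra h
            rw [α'.edge_none_mono hn'.1 (by omega)] at hj1
            cases hj1
          have hv1 : α'.vert (j + 1) = G.r e := by rw [α'.vert_succ hj1]; exact hj2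
          have hv2 : α'.vert (n' - 1 - k) = G.r e := (α'.vert_eq _ e he').symm
          have : j + 1 = n' - 1 - k := vne α' n' (j + 1) (n' - 1 - k) hn'.2
            (by omega) (by omega) (by rw [hv1, hv2])
          have hj : j = n' - 1 - (k + 1) := by omega
          rw [hj] at hj1
          rw [hj1] at hf'
          cases hf'
          rfl
        · rw [fib_eq hw hfsub hfsub' hsf hsf']
    -- n = n'
    have hnn : n = n' := by
      by_contra h
      have hlt : n < n' := by omega
      have h0 := claim (n - 1) (by omega)
      have hi1 : n - 1 - (n - 1) = 0 := by omega
      have hi2 : n' - 1 - (n - 1) = n' - n := by omega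
      rw [hi1, hi2] at h0
      obtain ⟨e1, he1, -⟩ := hsub 0 (by omega)
      have he1' : α'.edge (n' - n) = some e1 := by rw [← h0]; exact he1
      have hv1 : α'.vert (n' - n) = G.r e1 := (α'.vert_eq _ e1 he1').symm
      have hv0 : α'.vert 0 = G.r e1 := by
        show α'.rng = G.r e1
        rw [← h1]
        exact (α.rng_compat e1 he1).symm
      have := vne α' n' 0 (n' - n) hn'.2 (by omega) (by omega) (by rw [hv0, hv1])
      omega
    subst hnn
    refine LPath.ext' h1 (fun i => ?_)
    rcases Nat.lt_or_ge i n with hi | hi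
    · have h0 := claim (n - 1 - i) (by omega)
      have : n - 1 - (n - 1 - i) = i := by omega
      rw [this] at h0
      exact h0
    · rw [α.edge_none_mono hn.1 hi, α'.edge_none_mono hn'.1 hi]

end Stmt19
namespace Stmt19

open LPath

variable {G : DGraph} {V : Set G.V}

theorem FSet_finite (hnc : IsEmpty (DCycle G)) (hfin : (SPs V).Finite)
    (hV : V.Finite) : (FSet V).Finite := by
  classical
  set Φ : LPath G → G.V × Set G.E × Set (G.V × G.E) :=
    fun α => (α.rng, lastS α, trace V α) with hΦ
  have hinj : Set.InjOn Φ (FSet V) := by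
    intro α hα α' hα' heq
    have h1 : α.rng = α'.rng := congrArg Prod.fst heq
    have h2 : lastS α = lastS α' := congrArg (fun p => p.2.1) heq
    have h3 : trace V α = trace V α' := congrArg (fun p => p.2.2) heq
    obtain ⟨n, hn, -, -, -⟩ := id hα
    obtain ⟨n', hn', -, -, -⟩ := id hα'
    rcases le_total n n' with h | h
    · exact key hnc hα hα' hn hn' h h1 h2 h3
    · exact (key hnc hα' hα hn' hn h h1.symm h2.symm h3.symm).symm
  refine Set.Finite.of_finite_image ?_ hinj
  -- candidate sets
  have hSEV : ({e | EdgeOfSub V e ∧ G.s e ∈ V} : Set G.E).Finite := by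
    refine Set.Finite.subset (hV.biUnion (fun v _ => fib_finite hfin v)) ?_
    intro e ⟨h1, h2⟩
    exact Set.mem_biUnion h2 ⟨h1, rfl⟩
  have hlastCand : ((SE V) ∪ {e | EdgeOfSub V e ∧ G.s e ∈ V} : Set G.E).Finite :=
    (SE_finite hfin).union hSEV
  have hK : ({p : G.V × G.E | p.1 ∈ SV V ∧ EdgeOfSub V p.2 ∧ G.s p.2 = p.1} :
      Set (G.V × G.E)).Finite := by
    refine Set.Finite.subset (Set.Finite.prod (SV_finite hfin)
      ((SV_finite hfin).biUnion (fun v _ => fib_finite hfin v))) ?_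
    rintro ⟨v, e⟩ ⟨hv, he1, he2⟩
    exact ⟨hv, Set.mem_biUnion hv ⟨he1, he2⟩⟩
  refine Set.Finite.subset (Set.Finite.prod hV (Set.Finite.prod
    hlastCand.finite_subsets hK.finite_subsets)) ?_
  rintro _ ⟨α, hα, rfl⟩
  obtain ⟨n, hn, hrng, hsub, hlast⟩ := hα
  refine ⟨hrng, ?_, ?_⟩
  · -- lastS α ⊆ candidates
    show lastS α ⊆ _
    intro e he
    rcases Nat.eq_zero_or_pos n with h0 | h0
    · rw [lastS_trivial (h0 ▸ hn)] at he
      cases he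
    · obtain ⟨e', he', hesub⟩ := hsub (n - 1) (by omega)
      rw [lastS_eq hn h0 he'] at he
      cases he
      rcases hlast with h | h | ⟨e'', he'', hSE⟩
      · omega
      · right
        refine ⟨hesub, ?_⟩
        have : n - 1 + 1 = n := by omega
        rw [← this, α.vert_succ he'] at h
        exact h
      · left
        rw [he''] at he'
        cases he'
        exact hSE
  · show trace V α ⊆ _
    rintro ⟨v, e⟩ ⟨j, hj1, hj2, hj3⟩
    have hjn : j < n := by
      by_contra h
      rw [α.edge_none_mono hn.1 (by omega)] at hj1
      cases hj1
    obtain ⟨e', he', hesub⟩ := hsub j hjn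
    rw [he'] at hj1
    cases hj1
    exact ⟨hj3, hesub, hj2⟩

end Stmt19
namespace Stmt19

open LPath

variable {G : DGraph} {V : Set G.V}

theorem leLen_of_some (x : LPath G) {k n : ℕ} {e : G.E} (h : x.edge k = some e)
    (hn : n ≤ k + 1) : x.LeLen n :=
  fun i hi => x.isSome_mono (by rw [h]; rfl) (by omega)

theorem trunc_mem_FSet {x : LPath G} (hxb : x.Boundary) (hxV : x.rng ∈ V) {p : ℕ}
    (hp : x.LeLen p)
    (hlast : p = 0 ∨ (x.trunc p).vert p ∈ V ∨
      ∃ e, (x.trunc p).edge (p - 1) = some e ∧ e ∈ SE V) :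
    x.trunc p ∈ FSet V := by
  refine ⟨p, x.trunc_lenEq hp, hxV, ?_, hlast⟩
  intro i hi
  refine ⟨(x.edge i).get (hp i hi), ?_, ⟨x, hxb, hxV, i, (Option.some_get _).symm⟩⟩
  rw [x.trunc_edge_lt hi]
  simp

/-- Forward direction of the theorem. -/
theorem forward (hnc : IsEmpty (DCycle G)) (hV : V.Finite) (hfin : (SPs V).Finite) :
    ∃ F : Set (LPath G), F.Finite ∧ (∀ f ∈ F, ∃ n : ℕ, f.LenEq n) ∧
      ∀ x y : LPath G, x.Boundary → y.Boundary → x.rng ∈ V → y.rng ∈ V →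
        LPath.ShiftEquiv x y →
        ∃ α ∈ FSet V, ∃ β ∈ FSet V, IsMonoExtOf x y α β := by
  refine ⟨FSet V, FSet_finite hnc hfin hV, fun f hf => ⟨hf.choose, hf.choose_spec.1⟩, ?_⟩
  intro x y hxb hyb hxV hyV hse
  obtain ⟨lag, p, q, -, hxp, hyq, hshift⟩ := hse
  obtain ⟨p0, ⟨q0, hx0, hy0, hs0⟩, hpmin⟩ :=
    nat_least (⟨p, q, hxp, hyq, hshift⟩ :
      ∃ p, ∃ q, x.LeLen p ∧ y.LeLen q ∧ x.shift p = y.shift q)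
  have hvv : x.vert p0 = y.vert q0 := by
    rw [← x.shift_rng p0, ← y.shift_rng q0, hs0]
  have mono : IsMonoExtOf x y (x.trunc p0) (y.trunc q0) := by
    refine ⟨p0, q0, x.trunc_lenEq hx0, y.trunc_lenEq hy0, hx0, hy0, rfl,
      fun i hi => (x.trunc_edge_lt hi).symm, rfl,
      fun i hi => (y.trunc_edge_lt hi).symm, hs0⟩
  refine ⟨x.trunc p0, ?_, y.trunc q0, ?_, mono⟩
  · refine trunc_mem_FSet hxb hxV hx0 ?_
    rcases Nat.eq_zero_or_pos p0 with h0 | h0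
    · exact Or.inl h0
    rcases Nat.eq_zero_or_pos q0 with h0' | h0'
    · refine Or.inr (Or.inl ?_)
      rw [x.trunc_vert (le_refl p0), hvv, h0']
      exact hyV
    · -- both positive: last edge is a splitting edge
      refine Or.inr (Or.inr ?_)
      set e := (x.edge (p0 - 1)).get (hx0 (p0 - 1) (by omega)) with he
      set g := (y.edge (q0 - 1)).get (hy0 (q0 - 1) (by omega)) with hg
      have hxe : x.edge (p0 - 1) = some e := (Option.some_get _).symm
      have hyg : y.edge (q0 - 1) = some g := (Option.some_get _).symm
      have hne : e ≠ g := by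
        intro hcontra
        refine hpmin (p0 - 1) (by omega) ⟨q0 - 1, x.leLen_mono hx0 (by omega),
          y.leLen_mono hy0 (by omega), ?_⟩
        refine LPath.ext' ?_ ?_
        · rw [x.shift_rng, y.shift_rng, ← x.vert_eq _ e hxe, ← y.vert_eq _ g hyg, hcontra]
        · intro k
          rw [shift_edge, shift_edge]
          cases k with
          | zero =>
            rw [Nat.add_zero, Nat.add_zero, hxe, hyg, hcontra]
          | succ k =>
            have e1 : p0 - 1 + (k + 1) = p0 + k := by omega
            have e2 : q0 - 1 + (k + 1) = q0 + k := by omega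
            rw [e1, e2, ← x.shift_edge, ← y.shift_edge, hs0]
      have hss : G.s e = G.s g := by
        have e1 : x.vert p0 = G.s e := by
          have : p0 - 1 + 1 = p0 := by omega
          rw [← this, x.vert_succ hxe]
        have e2 : y.vert q0 = G.s g := by
          have : q0 - 1 + 1 = q0 := by omega
          rw [← this, y.vert_succ hyg]
        rw [← e1, ← e2, hvv]
      have hpair : (e, g) ∈ SPs V :=
        ⟨hne, hss, ⟨x, hxb, hxV, p0 - 1, hxe⟩, ⟨y, hyb, hyV, q0 - 1, hyg⟩⟩
      refine ⟨e, ?_, ⟨(e, g), hpair, Or.inl rfl⟩⟩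
      rw [x.trunc_edge_lt (by omega : p0 - 1 < p0)]
      exact hxe
  · refine trunc_mem_FSet hyb hyV hy0 ?_
    rcases Nat.eq_zero_or_pos q0 with h0' | h0'
    · exact Or.inl h0'
    rcases Nat.eq_zero_or_pos p0 with h0 | h0
    · refine Or.inr (Or.inl ?_)
      rw [y.trunc_vert (le_refl q0), ← hvv, h0]
      exact hxV
    · refine Or.inr (Or.inr ?_)
      set e := (x.edge (p0 - 1)).get (hx0 (p0 - 1) (by omega)) with he
      set g := (y.edge (q0 - 1)).get (hy0 (q0 - 1) (by omega)) with hg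
      have hxe : x.edge (p0 - 1) = some e := (Option.some_get _).symm
      have hyg : y.edge (q0 - 1) = some g := (Option.some_get _).symm
      have hne : e ≠ g := by
        intro hcontra
        refine hpmin (p0 - 1) (by omega) ⟨q0 - 1, x.leLen_mono hx0 (by omega),
          y.leLen_mono hy0 (by omega), ?_⟩
        refine LPath.ext' ?_ ?_
        · rw [x.shift_rng, y.shift_rng, ← x.vert_eq _ e hxe, ← y.vert_eq _ g hyg, hcontra]
        · intro k
          rw [shift_edge, shift_edge]
          cases k with
          | zero =>
            rw [Nat.add_zero, Nat.add_zero, hxe, hyg, hcontra]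
          | succ k =>
            have e1 : p0 - 1 + (k + 1) = p0 + k := by omega
            have e2 : q0 - 1 + (k + 1) = q0 + k := by omega
            rw [e1, e2, ← x.shift_edge, ← y.shift_edge, hs0]
      have hss : G.s e = G.s g := by
        have e1 : x.vert p0 = G.s e := by
          have : p0 - 1 + 1 = p0 := by omega
          rw [← this, x.vert_succ hxe]
        have e2 : y.vert q0 = G.s g := by
          have : q0 - 1 + 1 = q0 := by omega
          rw [← this, y.vert_succ hyg]
        rw [← e1, ← e2, hvv]
      have hpair : (e, g) ∈ SPs V :=
        ⟨hne, hss, ⟨x, hxb, hxV, p0 - 1, hxe⟩, ⟨y, hyb, hyV, q0 - 1, hyg⟩⟩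
      refine ⟨g, ?_, ⟨(e, g), hpair, Or.inr rfl⟩⟩
      rw [y.trunc_edge_lt (by omega : q0 - 1 < q0)]
      exact hyg

end Stmt19
namespace Stmt19

open LPath

variable {G : DGraph} {V : Set G.V}

/-- Backward direction of the theorem. -/
theorem backward (hnc : IsEmpty (DCycle G))
    (F : Set (LPath G)) (hFfin : F.Finite) (hFlen : ∀ f ∈ F, ∃ n : ℕ, f.LenEq n)
    (hFmain : ∀ x y : LPath G, x.Boundary → y.Boundary → x.rng ∈ V → y.rng ∈ V →
        LPath.ShiftEquiv x y → ∃ α ∈ F, ∃ β ∈ F, IsMonoExtOf x y α β) :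
    (SPs V).Finite := by
  classical
  set EF : Set G.E := ⋃ α ∈ F, {e | ∃ i, α.edge i = some e} with hEFdef
  have hEF : EF.Finite := by
    refine Set.Finite.biUnion hFfin (fun α hα => ?_)
    obtain ⟨n, hn⟩ := hFlen α hα
    refine Set.Finite.subset ((Set.finite_Iio n).biUnion
      (fun i (_ : i ∈ Set.Iio n) => Set.Subsingleton.finite
        (fun e (he : α.edge i = some e) g hg => by
          rw [he] at hg; exact (Option.some.injEq _ _ ▸ hg : e = g)))) ?_
    rintro e ⟨i, hi⟩
    have hin : i < n := by
      by_contra h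
      rw [α.edge_none_mono hn.1 (by omega)] at hi
      cases hi
    exact Set.mem_biUnion (Set.mem_Iio.mpr hin) hi
  refine Set.Finite.subset (hEF.prod hEF) ?_
  rintro ⟨f, g⟩ ⟨hne, hsfg, ⟨x0, hx0b, hx0V, i, hif⟩, ⟨y0, hy0b, hy0V, j, hjg⟩⟩
  obtain ⟨z, hzb, hzrng⟩ := boundary_from (G.s f)
  have hx0le : x0.LeLen (i + 1) := leLen_of_some x0 hif (le_refl _)
  have hy0le : y0.LeLen (j + 1) := leLen_of_some y0 hjg (le_refl _)
  have hzx : z.rng = x0.vert (i + 1) := by rw [hzrng, x0.vert_succ hif]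
  have hzy : z.rng = y0.vert (j + 1) := by rw [hzrng, hsfg, y0.vert_succ hjg]
  set x : LPath G := cat x0 (i + 1) z hx0le hzx with hxdef
  set y : LPath G := cat y0 (j + 1) z hy0le hzy with hydef
  have hxf : x.edge i = some f := by rw [hxdef, cat_edge_lt (by omega)]; exact hif
  have hyg : y.edge j = some g := by rw [hydef, cat_edge_lt (by omega)]; exact hjg
  have hxyse : LPath.ShiftEquiv x y := by
    refine ⟨(i + 1 : ℤ) - (j + 1), i + 1, j + 1, rfl, cat_leLen, cat_leLen, ?_⟩
    rw [hxdef, hydef, cat_shift, cat_shift]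
  obtain ⟨α, hαF, β, hβF, a, b, hαa, hβb, hxa, hyb, hxrng, hxe, hyrng, hye, hsab⟩ :=
    hFmain x y (cat_boundary hzb) (cat_boundary hzb)
      (by rw [hxdef, cat_rng]; exact hx0V) (by rw [hydef, cat_rng]; exact hy0V) hxyse
  -- f occurs in x at index i; g occurs in y at index j
  -- show i < a and j < b, hence f, g ∈ EF
  have tail_x : ∀ k : ℕ, x.edge k = y.edge (b + (k - a)) → a ≤ k → False → True := fun _ _ _ _ => trivial
  have hyif : a ≤ i → y.edge (b + (i - a)) = some f := by
    intro hia
    have h1 : (y.shift b).edge (i - a) = some f := by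
      rw [← hsab, shift_edge]
      have : a + (i - a) = i := by omega
      rw [this]
      exact hxf
    rw [← y.shift_edge]
    exact h1
  have hxjg : b ≤ j → x.edge (a + (j - b)) = some g := by
    intro hjb
    have h1 : (x.shift a).edge (j - b) = some g := by
      rw [hsab, shift_edge]
      have : b + (j - b) = j := by omega
      rw [this]
      exact hyg
    rw [← x.shift_edge]
    exact h1
  have hia : i < a := by
    by_contra hia'
    have hia : a ≤ i := by omega
    have h2 := hyif hia
    have hv1 : y.vert (b + (i - a) + 1) = G.s f := y.vert_succ h2
    rcases Nat.lt_or_ge j b with hjb | hjb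
    · -- f in tail, g in β: y has equal vertices at j+1 and b+(i-a)+1
      have hv2 : y.vert (j + 1) = G.s g := y.vert_succ hyg
      exact vert_inj hnc y (leLen_of_some y h2 (le_refl _))
        (show j + 1 < b + (i - a) + 1 by omega) (le_refl _)
        (by rw [hv2, ← hsfg, ← hv1])
    · -- both in tail
      have h3 : y.edge (b + (j - b)) = some g := by
        have : b + (j - b) = j := by omega
        rw [this]
        exact hyg
      have hv2 : y.vert (b + (j - b) + 1) = G.s g := y.vert_succ h3
      rcases Nat.lt_trichotomy (b + (i - a)) (b + (j - b)) with h | h | h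
      · exact vert_inj hnc y (leLen_of_some y h3 (le_refl _))
          (show b + (i - a) + 1 < b + (j - b) + 1 by omega) (le_refl _)
          (by rw [hv1, hsfg, ← hv2])
      · apply hne
        have : some f = some g := by rw [← h2, h, h3]
        exact Option.some.injEq _ _ ▸ this
      · exact vert_inj hnc y (leLen_of_some y h2 (le_refl _))
          (show b + (j - b) + 1 < b + (i - a) + 1 by omega) (le_refl _)
          (by rw [hv2, ← hsfg, ← hv1])
  have hjb : j < b := by
    by_contra hjb'
    have hjb : b ≤ j := by omega
    have h2 := hxjg hjb
    have hv1 : x.vert (a + (j - b) + 1) = G.s g := x.vert_succ h2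
    have hv2 : x.vert (i + 1) = G.s f := x.vert_succ hxf
    exact vert_inj hnc x (leLen_of_some x h2 (le_refl _))
      (show i + 1 < a + (j - b) + 1 by omega) (le_refl _)
      (by rw [hv2, hsfg, ← hv1])
  constructor
  · refine Set.mem_biUnion hαF ⟨i, ?_⟩
    rw [← hxe i hia]
    exact hxf
  · refine Set.mem_biUnion hβF ⟨j, ?_⟩
    rw [← hye j hjb]
    exact hyg

end Stmt19
/-- Let `E` be a row-finite directed graph with no cycles and let `V ⊆ E^0` be finite.
The following are equivalent: (1) the subgraph `E|_{VE^{≤∞}}` has only finitely many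
splitting pairs of edges; (2) there is a finite set `F` of finite paths such that
every pair `(x, y)` of shift-equivalent paths in `VE^{≤∞}` is a monolithic extension
of a pair in `F × F`. -/
theorem stmt19 (G : DGraph) (hrf : G.RowFinite) (hnc : IsEmpty (DCycle G))
    (V : Set G.V) (hV : V.Finite) :
    ({p : G.E × G.E | p.1 ≠ p.2 ∧ G.s p.1 = G.s p.2 ∧
        EdgeOfSub V p.1 ∧ EdgeOfSub V p.2}.Finite) ↔
    (∃ F : Set (LPath G), F.Finite ∧ (∀ f ∈ F, ∃ n : ℕ, f.LenEq n) ∧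
      ∀ x y : LPath G, x.Boundary → y.Boundary → x.rng ∈ V → y.rng ∈ V →
        LPath.ShiftEquiv x y →
        ∃ α ∈ F, ∃ β ∈ F, IsMonoExtOf x y α β) := by
  constructor
  · intro hfin
    obtain ⟨F0, -, -, h3⟩ := Stmt19.forward hnc hV hfin
    exact ⟨Stmt19.FSet V, Stmt19.FSet_finite hnc hfin hV,
      fun f hf => ⟨hf.choose, hf.choose_spec.1⟩, h3⟩
  · rintro ⟨F, h1, h2, h3⟩
    exact Stmt19.backward hnc F h1 h2 h3
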